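/- Let ρ : ℝ^N → ℝ be a convex risk measure (monotone, translation invariant, convex). Define α : ℝ^N → ℝ ∪ {+∞} by α(q) = sup{⟨q, X⟩ : X ∈ ℝ^N, ρ(X) ≤ 0} for q ∈ M₁ and α(q) = +∞ for q ∉ M₁. Then: (i) for every X ∈ ℝ^N, ρ(X) = sup_{q ∈ M₁} (⟨q, X⟩ − α(q)); (ii) for every q ∈ M₁, α(q) = sup_{X ∈ ℝ^N} (⟨q, X⟩ − ρ(X)). -/

import Mathlib

open scoped BigOperators
open Classical

/-- The penalty function `α` associated with a risk measure `ρ`: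
`α(q) = sup {⟨q,X⟩ : ρ(X) ≤ 0}` for `q ∈ M₁`, and `+∞` outside `M₁`. -/
noncomputable def alphaOf {N : ℕ} (ρ : (Fin N → ℝ) → ℝ) (q : Fin N → ℝ) : EReal :=
  if q ∈ stdSimplex ℝ (Fin N) then
    ⨆ X ∈ {X : Fin N → ℝ | ρ X ≤ 0}, (((∑ i, q i * X i : ℝ)) : EReal)
  else ⊤

private lemma ereal_le_of_forall_sub (r : ℝ) (y : EReal)
    (h : ∀ δ : ℝ, 0 < δ → ((r - δ : ℝ) : EReal) ≤ y) : (r : EReal) ≤ y := by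
  induction y using EReal.rec with
  | bot =>
    have := h 1 one_pos
    rw [le_bot_iff] at this
    exact absurd this (EReal.coe_ne_bot _)
  | coe s =>
    rw [EReal.coe_le_coe_iff]
    refine le_of_forall_pos_le_add fun ε hε => ?_
    have := h ε hε
    rw [EReal.coe_le_coe_iff] at this
    linarith
  | top => exact le_top

/-- for a convex risk measure `ρ` (monotone, translation invariant, convex),
with `α` as above: (i) `ρ(X) = sup_{q ∈ M₁} (⟨q,X⟩ − α(q))` for all `X`;
(ii) `α(q) = sup_X (⟨q,X⟩ − ρ(X))` for all `q ∈ M₁`. -/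
theorem stmt_3 {N : ℕ} (hN : 1 ≤ N) (ρ : (Fin N → ℝ) → ℝ)
    (hmono : ∀ X Y : Fin N → ℝ, X ≤ Y → ρ X ≤ ρ Y)
    (htrans : ∀ (X : Fin N → ℝ) (m : ℝ), ρ (X + fun _ => m) = ρ X + m)
    (hconv : ∀ X Y : Fin N → ℝ, ∀ t : ℝ, 0 < t → t < 1 →
      ρ (t • X + (1 - t) • Y) ≤ t * ρ X + (1 - t) * ρ Y) :
    (∀ X : Fin N → ℝ,
      ((ρ X : ℝ) : EReal)
        = ⨆ q ∈ stdSimplex ℝ (Fin N), (((∑ i, q i * X i : ℝ)) : EReal) - alphaOf ρ q) ∧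
    (∀ q ∈ stdSimplex ℝ (Fin N),
      alphaOf ρ q
        = ⨆ X : Fin N → ℝ, (((∑ i, q i * X i : ℝ)) : EReal) - ((ρ X : ℝ) : EReal)) := by
  -- inner product translation rule
  have F1 : ∀ q ∈ stdSimplex ℝ (Fin N), ∀ (X : Fin N → ℝ) (m : ℝ),
      (∑ i, q i * (X i + m)) = (∑ i, q i * X i) + m := by
    intro q hq X m
    have hsum : ∑ i, q i = 1 := hq.2
    have : ∑ i, q i * (X i + m) = (∑ i, q i * X i) + (∑ i, q i) * m := by
      rw [Finset.sum_mul, ← Finset.sum_add_distrib]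
      congr 1; ext i; ring
    simpa [hsum] using this
  -- α q is at least ⟨q,Y⟩ for acceptable Y
  have F2 : ∀ q ∈ stdSimplex ℝ (Fin N), ∀ Y : Fin N → ℝ, ρ Y ≤ 0 →
      ((∑ i, q i * Y i : ℝ) : EReal) ≤ alphaOf ρ q := by
    intro q hq Y hY
    rw [alphaOf, if_pos hq]
    exact le_iSup₂ (f := fun X (_ : X ∈ {X : Fin N → ℝ | ρ X ≤ 0}) =>
      ((∑ i, q i * X i : ℝ) : EReal)) Y hY
  -- α q ≥ ⟨q,X⟩ - ρ X
  have F3 : ∀ q ∈ stdSimplex ℝ (Fin N), ∀ X : Fin N → ℝ,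
      (((∑ i, q i * X i) - ρ X : ℝ) : EReal) ≤ alphaOf ρ q := by
    intro q hq X
    set Y : Fin N → ℝ := X + fun _ => -(ρ X) with hYdef
    have hY : ρ Y ≤ 0 := by rw [hYdef, htrans]; linarith
    have h2 := F2 q hq Y hY
    have h1 : (∑ i, q i * Y i) = (∑ i, q i * X i) - ρ X := by
      have hF := F1 q hq X (-(ρ X))
      have : ∀ i, Y i = X i + (-(ρ X)) := fun i => rfl
      simp only [this]
      rw [hF]; ring
    rwa [h1] at h2
  -- ρ is continuous (1-Lipschitz for the sup distance)
  have key : ∀ Y Z : Fin N → ℝ, ρ Y ≤ ρ Z + dist Y Z := by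
    intro Y Z
    have hle : Y ≤ Z + fun _ => dist Y Z := by
      intro j
      have h1 : dist (Y j) (Z j) ≤ dist Y Z := dist_le_pi_dist Y Z j
      have h2 : Y j - Z j ≤ dist (Y j) (Z j) := by
        rw [Real.dist_eq]; exact le_abs_self _
      show Y j ≤ Z j + dist Y Z
      linarith
    calc ρ Y ≤ ρ (Z + fun _ => dist Y Z) := hmono _ _ hle
      _ = ρ Z + dist Y Z := htrans _ _
  have hcont : Continuous ρ := by
    refine (LipschitzWith.of_dist_le_mul (K := 1) fun Y Z => ?_).continuous
    rw [NNReal.coe_one, one_mul, Real.dist_eq, abs_sub_le_iff]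
    constructor
    · linarith [key Y Z]
    · have := key Z Y
      rw [dist_comm] at this
      linarith
  constructor
  · -- part (i)
    intro X
    apply le_antisymm
    · -- hard direction: ρ X ≤ sup
      apply ereal_le_of_forall_sub
      intro δ hδ
      set X'' : Fin N → ℝ := X + fun _ => (δ - ρ X) with hX''def
      have hρX'' : ρ X'' = δ := by rw [hX''def, htrans]; ring
      set s : Set (Fin N → ℝ) := {Y | ρ Y < 0} with hs
      have hsopen : IsOpen s := isOpen_lt hcont continuous_const
      have hsconv : Convex ℝ s := by
        intro Y hY Z hZ a b ha hb hab
        have hY' : ρ Y < 0 := hY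
        have hZ' : ρ Z < 0 := hZ
        rcases eq_or_lt_of_le ha with ha0 | ha0
        · have hb1 : b = 1 := by linarith
          show ρ (a • Y + b • Z) < 0
          rw [← ha0, hb1]; simpa using hZ'
        rcases eq_or_lt_of_le hb with hb0 | hb0
        · have ha1 : a = 1 := by linarith
          show ρ (a • Y + b • Z) < 0
          rw [← hb0, ha1]; simpa using hY'
        have ha1 : a < 1 := by linarith
        have hb' : b = 1 - a := by linarith
        show ρ (a • Y + b • Z) < 0
        have hc : ρ (a • Y + (1 - a) • Z) ≤ a * ρ Y + (1 - a) * ρ Z :=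
          hconv Y Z a ha0 ha1
        rw [hb']
        nlinarith
      -- a point deep inside s
      set Y₀ : Fin N → ℝ := (0 : Fin N → ℝ) + fun _ => (-(ρ 0) - 1) with hY₀def
      have hρY₀ : ρ Y₀ = -1 := by rw [hY₀def, htrans]; ring
      have hY₀s : Y₀ ∈ s := by show ρ Y₀ < 0; rw [hρY₀]; norm_num
      have hX''s : X'' ∉ s := by
        show ¬ ρ X'' < 0
        rw [hρX'']; linarith
      obtain ⟨f, hf⟩ := geometric_hahn_banach_open_point hsconv hsopen hX''s
      have hfY₀ : f Y₀ < f X'' := hf Y₀ hY₀s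
      -- basis coefficients are nonnegative
      have hsingle : ∀ i, 0 ≤ f (Pi.single i 1) := by
        intro i
        by_contra hneg
        push_neg at hneg
        set c := f (Pi.single i 1) with hc
        set t := (f X'' - f Y₀ + 1) / (-c) with ht
        set e : Fin N → ℝ := Pi.single i 1 with he
        have hcpos : 0 < -c := by linarith
        have htpos : 0 < t := div_pos (by linarith) hcpos
        have hWle : Y₀ - t • e ≤ Y₀ := by
          intro j
          have h0 : 0 ≤ (t • e) j := by
            rw [he]
            by_cases hji : j = i
            · subst hji; simp; positivity
            · simp [Pi.single_apply, hji]
          simp only [Pi.sub_apply]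
          linarith
        have hWs : Y₀ - t • e ∈ s := by
          show ρ _ < 0
          exact lt_of_le_of_lt (hmono _ _ hWle) (by rw [hρY₀]; norm_num)
        have hcontr := hf _ hWs
        rw [map_sub, map_smul, smul_eq_mul, ← hc] at hcontr
        have htc : t * c = -(f X'' - f Y₀ + 1) := by
          rw [ht, div_mul_eq_mul_div, div_eq_iff (neg_ne_zero.mpr (ne_of_lt hneg))]; ring
        linarith
      -- linear representation of f
      have hrep : ∀ Z : Fin N → ℝ, f Z = ∑ i, Z i * f (Pi.single i 1) := by
        intro Z
        have hZ : Z = ∑ i, Z i • (Pi.single i 1 : Fin N → ℝ) := by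
          have h2 : ∀ i, Z i • (Pi.single i 1 : Fin N → ℝ) = Pi.single i (Z i) := by
            intro i; rw [← Pi.single_smul, smul_eq_mul, mul_one]
          simp only [h2]
          exact (Finset.univ_sum_single Z).symm
        conv_lhs => rw [hZ]
        rw [map_sum]
        congr 1; ext i
        rw [map_smul, smul_eq_mul]
      have hone : f (fun _ : Fin N => (1:ℝ)) = ∑ i, f (Pi.single i 1) := by
        have := hrep (fun _ => 1)
        simpa using this
      set F := f (fun _ : Fin N => (1:ℝ)) with hF
      have hFnonneg : 0 ≤ F := by
        rw [hone]
        exact Finset.sum_nonneg fun i _ => hsingle i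
      have hFpos : 0 < F := by
        rcases eq_or_lt_of_le hFnonneg with h0 | h0
        · exfalso
          have hzero : ∀ i ∈ Finset.univ, f (Pi.single i (1:ℝ)) = 0 := by
            rw [← Finset.sum_eq_zero_iff_of_nonneg fun i _ => hsingle i]
            rw [← hone]
            exact h0.symm
          have hf0 : ∀ Z : Fin N → ℝ, f Z = 0 := by
            intro Z
            rw [hrep Z]
            apply Finset.sum_eq_zero
            intro i hi
            rw [hzero i hi, mul_zero]
          rw [hf0 Y₀, hf0 X''] at hfY₀
          exact lt_irrefl 0 hfY₀
        · exact h0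
      set q : Fin N → ℝ := fun i => f (Pi.single i 1) / F with hqdef
      have hqmem : q ∈ stdSimplex ℝ (Fin N) := by
        constructor
        · intro i
          exact div_nonneg (hsingle i) hFnonneg
        · rw [hqdef]
          simp only
          rw [← Finset.sum_div, ← hone, div_self (ne_of_gt hFpos)]
      have hip : ∀ Z : Fin N → ℝ, (∑ i, q i * Z i) = f Z / F := by
        intro Z
        rw [hrep Z, Finset.sum_div]
        apply Finset.sum_congr rfl
        intro i _
        rw [hqdef]
        ring
      -- f Y ≤ f X'' for all acceptable Y
      have hbound : ∀ Y : Fin N → ℝ, ρ Y ≤ 0 → f Y ≤ f X'' := by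
        intro Y hY
        refine le_of_forall_pos_le_add fun ε hε => ?_
        set t := ε / F with htdef
        have htpos : 0 < t := div_pos hε hFpos
        have hYs : Y + (fun _ => -t) ∈ s := by
          show ρ _ < 0
          rw [htrans]; linarith
        have h1 := hf _ hYs
        have h2 : f (Y + fun _ => -t) = f Y + (-t) * F := by
          rw [map_add]
          congr 1
          have : (fun _ : Fin N => -t) = (-t) • (fun _ : Fin N => (1:ℝ)) := by
            funext j; simp
          rw [this, map_smul, smul_eq_mul, ← hF]
        rw [h2] at h1
        have htF : t * F = ε := by
          rw [htdef]; field_simp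
        linarith
      -- bound α q
      have halpha_le : alphaOf ρ q ≤ ((∑ i, q i * X'' i : ℝ) : EReal) := by
        rw [alphaOf, if_pos hqmem]
        apply iSup₂_le
        intro Y hY
        rw [EReal.coe_le_coe_iff, hip Y, hip X'']
        exact (div_le_div_iff_of_pos_right hFpos).mpr (hbound Y hY)
      have hαne_top : alphaOf ρ q ≠ ⊤ :=
        fun h => absurd (h ▸ halpha_le) (by simp)
      have hαne_bot : alphaOf ρ q ≠ ⊥ := by
        intro hb
        have := F2 q hqmem Y₀ (by rw [hρY₀]; norm_num)
        rw [hb, le_bot_iff] at this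
        exact EReal.coe_ne_bot _ this
      set a := (alphaOf ρ q).toReal with hadef
      have ha : alphaOf ρ q = (a : EReal) := (EReal.coe_toReal hαne_top hαne_bot).symm
      have haX'' : a ≤ ∑ i, q i * X'' i := by
        rw [ha] at halpha_le
        exact EReal.coe_le_coe_iff.1 halpha_le
      have hsum'' : (∑ i, q i * X'' i) = (∑ i, q i * X i) + (δ - ρ X) := by
        have := F1 q hqmem X (δ - ρ X)
        simpa [hX''def] using this
      have hmain : ((ρ X - δ : ℝ) : EReal)
          ≤ ((∑ i, q i * X i : ℝ) : EReal) - alphaOf ρ q := by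
        rw [ha, ← EReal.coe_sub, EReal.coe_le_coe_iff]
        linarith
      exact hmain.trans (le_iSup₂ (f := fun q (_ : q ∈ stdSimplex ℝ (Fin N)) =>
        ((∑ i, q i * X i : ℝ) : EReal) - alphaOf ρ q) q hqmem)
    · -- easy direction: sup ≤ ρ X
      apply iSup₂_le
      intro q hq
      have h3 := F3 q hq X
      calc ((∑ i, q i * X i : ℝ) : EReal) - alphaOf ρ q
          ≤ ((∑ i, q i * X i : ℝ) : EReal) - (((∑ i, q i * X i) - ρ X : ℝ) : EReal) :=
            EReal.sub_le_sub (le_refl _) h3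
        _ = ((ρ X : ℝ) : EReal) := by
            rw [← EReal.coe_sub]; norm_num
  · -- part (ii)
    intro q hq
    apply le_antisymm
    · rw [alphaOf, if_pos hq]
      apply iSup₂_le
      intro Y hY
      have hY' : ρ Y ≤ 0 := hY
      calc ((∑ i, q i * Y i : ℝ) : EReal)
          ≤ (((∑ i, q i * Y i) - ρ Y : ℝ) : EReal) := by
            rw [EReal.coe_le_coe_iff]; linarith
        _ = ((∑ i, q i * Y i : ℝ) : EReal) - ((ρ Y : ℝ) : EReal) := EReal.coe_sub _ _
        _ ≤ ⨆ X : Fin N → ℝ, ((∑ i, q i * X i : ℝ) : EReal) - ((ρ X : ℝ) : EReal) :=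
            le_iSup (fun X => ((∑ i, q i * X i : ℝ) : EReal) - ((ρ X : ℝ) : EReal)) Y
    · apply iSup_le
      intro X
      rw [← EReal.coe_sub]
      exact F3 q hq X
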